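/- arXiv:1707.02503 — 3 statements merged into one kernel-verified Lean document; each statement's English description precedes it below -/
import Mathlib

section
/- Let T ≥ 1 and N ≥ 1 be integers, b ∈ ℝ^T, and for each n ∈ {1,…,N} let C_n ⊆ ℝ^T be a nonempty convex set such that all elements of C_n have the same coordinate sum. Let (p_n^k)_{k≥0} be sequences with p_n^0 ∈ C_n, d^k = (1/N)·(b + Σ_{n=1}^N p_n^k), and p_n^{k+1} ∈ C_n a minimizer of ‖p − p_n^k + d^k‖² over p ∈ C_n for every k ≥ 0 and every n. Then for every K ≥ 1, Σ_{k=0}^{K−1} Σ_{n=1}^N ‖p_n^{k+1} − p_n^k‖² ≤ T·N·V(d^0); in particular the series Σ_{k=0}^∞ Σ_{n=1}^N ‖p_n^{k+1} − p_n^k‖² converges and the update steps p_n^{k+1} − p_n^k tend to 0 as k → ∞. -/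
open scoped RealInnerProductSpace

/-- The (time) variance of a traffic profile `d ∈ ℝ^T`. -/
noncomputable def V {T : ℕ} (d : EuclideanSpace ℝ (Fin T)) : ℝ :=
  (1 / (T : ℝ)) * ∑ t, (d t - (1 / (T : ℝ)) * ∑ s, d s) ^ 2

lemma euc_norm_sq {T : ℕ} (x : EuclideanSpace ℝ (Fin T)) : ‖x‖ ^ 2 = ∑ t, x t ^ 2 := by
  rw [EuclideanSpace.norm_eq, Real.sq_sqrt (by positivity)]
  simp [sq_abs]

lemma euc_inner {T : ℕ} (x y : EuclideanSpace ℝ (Fin T)) : ⟪x, y⟫ = ∑ t, x t * y t := by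
  simp [PiLp.inner_apply, RCLike.inner_apply, conj_trivial]
  exact Finset.sum_congr rfl fun _ _ => mul_comm _ _

lemma euc_sum_apply {T : ℕ} {ι : Type*} (s : Finset ι) (f : ι → EuclideanSpace ℝ (Fin T))
    (t : Fin T) : (∑ n ∈ s, f n) t = ∑ n ∈ s, f n t := by
  classical
  induction s using Finset.induction with
  | empty => rfl
  | insert _ _ h ih => rw [Finset.sum_insert h, Finset.sum_insert h, PiLp.add_apply, ih]

lemma V_nonneg {T : ℕ} (d : EuclideanSpace ℝ (Fin T)) : 0 ≤ V d := by
  rw [V]; positivity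

set_option maxHeartbeats 1000000 in
theorem summable_update_steps (T N : ℕ) (hT : 1 ≤ T) (hN : 1 ≤ N)
    (b : EuclideanSpace ℝ (Fin T))
    (C : Fin N → Set (EuclideanSpace ℝ (Fin T)))
    (hconv : ∀ n, Convex ℝ (C n)) (hne : ∀ n, (C n).Nonempty)
    (hsum : ∀ n, ∃ P : ℝ, ∀ p ∈ C n, ∑ t, p t = P)
    (p : Fin N → ℕ → EuclideanSpace ℝ (Fin T))
    (hp0 : ∀ n, p n 0 ∈ C n)
    (d : ℕ → EuclideanSpace ℝ (Fin T))
    (hd : ∀ k, d k = (1 / (N : ℝ)) • (b + ∑ n, p n k))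
    (hmem : ∀ n k, p n (k + 1) ∈ C n)
    (hmin : ∀ n k, ∀ q ∈ C n, ‖p n (k + 1) - p n k + d k‖ ≤ ‖q - p n k + d k‖) :
    (∀ K, 1 ≤ K →
        ∑ k ∈ Finset.range K, ∑ n, ‖p n (k + 1) - p n k‖ ^ 2 ≤ (T : ℝ) * (N : ℝ) * V (d 0))
      ∧ Summable (fun k => ∑ n, ‖p n (k + 1) - p n k‖ ^ 2)
      ∧ ∀ n, Filter.Tendsto (fun k => p n (k + 1) - p n k) Filter.atTop (nhds 0) := by
  classical
  have hNpos : (0:ℝ) < N := by exact_mod_cast hN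
  have hTpos : (0:ℝ) < T := by exact_mod_cast hT
  have hmemC : ∀ n k, p n k ∈ C n := by
    intro n k
    cases k with
    | zero => exact hp0 n
    | succ k => exact hmem n k
  -- coordinate sums of update steps vanish
  have hΔsum : ∀ n k, ∑ t, (p n (k+1) - p n k) t = 0 := by
    intro n k
    obtain ⟨P, hP⟩ := hsum n
    have h1 := hP _ (hmemC n (k+1))
    have h2 := hP _ (hmemC n k)
    simp only [PiLp.sub_apply]
    rw [Finset.sum_sub_distrib, h1, h2, sub_self]
  -- variational inequality from the minimization property
  have hvar : ∀ n k, ⟪p n (k+1) - p n k, d k⟫ ≤ -‖p n (k+1) - p n k‖^2 := by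
    intro n k
    haveI : Nonempty (C n) := ⟨⟨p n (k+1), hmem n k⟩⟩
    have hflip : ∀ q : EuclideanSpace ℝ (Fin T),
        (p n k - d k) - q = -(q - p n k + d k) := by intro q; abel
    have heq : ‖(p n k - d k) - p n (k+1)‖ = ⨅ w : C n, ‖(p n k - d k) - w‖ := by
      apply le_antisymm
      · refine le_ciInf fun w => ?_
        rw [hflip, hflip, norm_neg, norm_neg]
        exact hmin n k w w.2
      · have hb : BddBelow (Set.range fun w : C n =>
            ‖(p n k - d k) - (w : EuclideanSpace ℝ (Fin T))‖) := by
          refine ⟨0, ?_⟩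
          rintro x ⟨w, rfl⟩
          exact norm_nonneg _
        exact ciInf_le hb ⟨p n (k+1), hmem n k⟩
    have hproj := (norm_eq_iInf_iff_real_inner_le_zero (hconv n) (hmem n k)).mp heq
      (p n k) (hmemC n k)
    have e1 : (p n k - d k) - p n (k+1) = -((p n (k+1) - p n k) + d k) := by abel
    have e2 : p n k - p n (k+1) = -(p n (k+1) - p n k) := by abel
    rw [e1, e2, inner_neg_neg, inner_add_left, real_inner_self_eq_norm_sq] at hproj
    rw [real_inner_comm] at hproj
    linarith
  -- recurrence for d
  have hrec : ∀ k, d (k+1) = d k + ((N:ℝ))⁻¹ • ∑ n, (p n (k+1) - p n k) := by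
    intro k
    rw [hd (k+1), hd k, Finset.sum_sub_distrib, one_div]
    rw [smul_add, smul_add, smul_sub]
    abel
  -- the mean of d is preserved
  have hmean : ∀ k, ∑ s, d k s = ∑ s, d 0 s := by
    intro k
    induction k with
    | zero => rfl
    | succ k ih =>
      rw [← ih, hrec k]
      simp only [PiLp.add_apply, PiLp.smul_apply, smul_eq_mul]
      rw [Finset.sum_add_distrib, ← Finset.mul_sum]
      have hz : ∑ t, (∑ n, (p n (k+1) - p n k)) t = 0 := by
        have : ∀ t, (∑ n, (p n (k+1) - p n k)) t = ∑ n, (p n (k+1) - p n k) t :=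
          fun t => euc_sum_apply _ _ t
        simp only [this]
        rw [Finset.sum_comm]
        exact Finset.sum_eq_zero (fun n _ => hΔsum n k)
      rw [hz, mul_zero, add_zero]
  -- per-step descent bound
  have hstep : ∀ k, ∑ n, ‖p n (k+1) - p n k‖^2
      ≤ (T:ℝ)*(N:ℝ)*(V (d k) - V (d (k+1))) := by
    intro k
    set S : EuclideanSpace ℝ (Fin T) := ∑ n, (p n (k+1) - p n k) with hS
    obtain ⟨m, hm⟩ : ∃ m : ℝ, m = (1/(T:ℝ)) * ∑ s, d 0 s := ⟨_, rfl⟩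
    set one : EuclideanSpace ℝ (Fin T) := (WithLp.equiv 2 (Fin T → ℝ)).symm (fun _ => 1)
      with hone
    have honet : ∀ t, one t = 1 := fun t => rfl
    have coords : ∀ (v : EuclideanSpace ℝ (Fin T)) t, (v - m • one) t = v t - m := by
      intro v t
      simp [PiLp.sub_apply, PiLp.smul_apply, honet]
    -- T * V = squared distance to the mean
    have TV : ∀ j, (T:ℝ) * V (d j) = ‖d j - m • one‖^2 := by
      intro j
      rw [V, hmean j, euc_norm_sq]
      simp only [← hm]
      simp only [coords]
      rw [← mul_assoc, mul_one_div_cancel (ne_of_gt hTpos), one_mul]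
    -- sum of S coordinates is 0
    have hSsum : ∑ t, S t = 0 := by
      have : ∀ t, S t = ∑ n, (p n (k+1) - p n k) t := fun t => euc_sum_apply _ _ t
      simp only [this]
      rw [Finset.sum_comm]
      exact Finset.sum_eq_zero (fun n _ => hΔsum n k)
    have honeS : ⟪one, S⟫ = 0 := by
      rw [euc_inner]
      simp only [honet, one_mul]
      exact hSsum
    -- inner product bound
    have hI : ⟪d k, S⟫ ≤ -∑ n, ‖p n (k+1) - p n k‖^2 := by
      rw [hS, inner_sum]
      have : ∀ n ∈ Finset.univ, ⟪d k, p n (k+1) - p n k⟫ ≤ -‖p n (k+1) - p n k‖^2 := by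
        intro n _
        rw [real_inner_comm]
        exact hvar n k
      calc ∑ n, ⟪d k, p n (k+1) - p n k⟫ ≤ ∑ n, (-‖p n (k+1) - p n k‖^2) :=
            Finset.sum_le_sum this
        _ = -∑ n, ‖p n (k+1) - p n k‖^2 := by rw [Finset.sum_neg_distrib]
    -- Cauchy-Schwarz type bound
    have hCS : ‖S‖^2 ≤ (N:ℝ) * ∑ n, ‖p n (k+1) - p n k‖^2 := by
      have h1 : ‖S‖ ≤ ∑ n, ‖p n (k+1) - p n k‖ := norm_sum_le _ _
      have h2 : ‖S‖^2 ≤ (∑ n, ‖p n (k+1) - p n k‖)^2 := by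
        apply sq_le_sq' _ h1
        have := norm_nonneg S
        have := Finset.sum_nonneg (fun n (_ : n ∈ Finset.univ) =>
          norm_nonneg (p n (k+1) - p n k))
        linarith
      have h3 : (∑ n, ‖p n (k+1) - p n k‖)^2
          ≤ (Finset.univ : Finset (Fin N)).card * ∑ n, ‖p n (k+1) - p n k‖^2 :=
        sq_sum_le_card_mul_sum_sq
      simp only [Finset.card_univ, Fintype.card_fin] at h3
      calc ‖S‖^2 ≤ _ := h2
        _ ≤ _ := h3
    -- expansion of the new variance
    have hexp : (T:ℝ) * V (d (k+1))
        = (T:ℝ) * V (d k) + 2 * ((N:ℝ))⁻¹ * ⟪d k, S⟫ + ((N:ℝ))⁻¹^2 * ‖S‖^2 := by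
      rw [TV, TV]
      have e : d (k+1) - m • one = (d k - m • one) + ((N:ℝ))⁻¹ • S := by
        rw [hrec k, ← hS]; abel
      rw [e, norm_add_sq_real, real_inner_smul_right, norm_smul]
      have hip : ⟪d k - m • one, S⟫ = ⟪d k, S⟫ := by
        rw [inner_sub_left, real_inner_smul_left, honeS, mul_zero, sub_zero]
      rw [hip]
      have : ‖((N:ℝ))⁻¹‖ = ((N:ℝ))⁻¹ := by
        rw [Real.norm_eq_abs, abs_of_pos (by positivity)]
      rw [mul_pow, this]
      ring
    set A : ℝ := ∑ n, ‖p n (k+1) - p n k‖^2 with hA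
    have hAnn : 0 ≤ A := Finset.sum_nonneg (fun n _ => sq_nonneg _)
    have key : (T:ℝ)*(N:ℝ)*(V (d k) - V (d (k+1)))
        = -2 * ⟪d k, S⟫ - ((N:ℝ))⁻¹ * ‖S‖^2 := by
      have : (T:ℝ)*(N:ℝ)*(V (d k) - V (d (k+1)))
          = (N:ℝ) * ((T:ℝ) * V (d k)) - (N:ℝ) * ((T:ℝ) * V (d (k+1))) := by ring
      rw [this, hexp]
      have hNinv : (N:ℝ) * ((N:ℝ))⁻¹ = 1 := mul_inv_cancel₀ (ne_of_gt hNpos)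
      field_simp
      ring
    rw [key]
    have hSnn : 0 ≤ ‖S‖^2 := sq_nonneg _
    have hinvpos : 0 < ((N:ℝ))⁻¹ := by positivity
    have h4 : ((N:ℝ))⁻¹ * ‖S‖^2 ≤ ((N:ℝ))⁻¹ * ((N:ℝ) * A) := by
      apply mul_le_mul_of_nonneg_left hCS (le_of_lt hinvpos)
    have h5 : ((N:ℝ))⁻¹ * ((N:ℝ) * A) = A := by
      field_simp
    nlinarith [hI]
  -- partial sums are bounded
  have hbound : ∀ K, ∑ k ∈ Finset.range K, ∑ n, ‖p n (k + 1) - p n k‖ ^ 2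
      ≤ (T:ℝ) * (N:ℝ) * V (d 0) := by
    intro K
    have h1 : ∑ k ∈ Finset.range K, ∑ n, ‖p n (k + 1) - p n k‖ ^ 2
        ≤ ∑ k ∈ Finset.range K, ((T:ℝ)*(N:ℝ)*V (d k) - (T:ℝ)*(N:ℝ)*V (d (k+1))) := by
      apply Finset.sum_le_sum
      intro k _
      have := hstep k
      linarith [this, (by ring : (T:ℝ)*(N:ℝ)*(V (d k) - V (d (k+1)))
        = (T:ℝ)*(N:ℝ)*V (d k) - (T:ℝ)*(N:ℝ)*V (d (k+1)))]
    have h2 : ∑ k ∈ Finset.range K, ((T:ℝ)*(N:ℝ)*V (d k) - (T:ℝ)*(N:ℝ)*V (d (k+1)))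
        = (T:ℝ)*(N:ℝ)*V (d 0) - (T:ℝ)*(N:ℝ)*V (d K) :=
      Finset.sum_range_sub' (fun k => (T:ℝ)*(N:ℝ)*V (d k)) K
    have h3 : 0 ≤ (T:ℝ)*(N:ℝ)*V (d K) := by
      have := V_nonneg (d K)
      positivity
    linarith
  refine ⟨fun K _ => hbound K, ?_, ?_⟩
  · exact summable_of_sum_range_le
      (fun k => Finset.sum_nonneg (fun n _ => sq_nonneg _)) hbound
  · have hsummable : Summable (fun k => ∑ n, ‖p n (k + 1) - p n k‖ ^ 2) :=
      summable_of_sum_range_le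
        (fun k => Finset.sum_nonneg (fun n _ => sq_nonneg _)) hbound
    intro n
    have h1 : Filter.Tendsto (fun k => ∑ n, ‖p n (k + 1) - p n k‖ ^ 2)
        Filter.atTop (nhds 0) := hsummable.tendsto_atTop_zero
    have h2 : Filter.Tendsto (fun k => ‖p n (k + 1) - p n k‖ ^ 2)
        Filter.atTop (nhds 0) := by
      apply squeeze_zero (fun k => sq_nonneg _) _ h1
      intro k
      exact Finset.single_le_sum (fun i _ => sq_nonneg ‖p i (k+1) - p i k‖)
        (Finset.mem_univ n)
    rw [tendsto_zero_iff_norm_tendsto_zero]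
    have h3 := h2.sqrt
    simpa [Real.sqrt_sq (norm_nonneg _)] using h3
end

section
/- Let T ≥ 1 and let N′, N″ be disjoint finite index sets with N := |N′| + |N″| ≥ 2. Let b ∈ ℝ^T, let p_n ∈ ℝ^T for each n ∈ N′ ∪ N″, and set d = (1/N)·(b + Σ_n p_n). Suppose: (i) for each n ∈ N′ there is a vector p_n⁺ ∈ ℝ^T with Σ_t p_n⁺(t) = Σ_t p_n(t) and ⟨d, p_n⁺ − p_n⟩ ≤ −‖p_n⁺ − p_n‖²; (ii) for each n ∈ N″ there is an integrable random vector X_n in ℝ^T such that the family (X_n)_{n∈N″} is independent, ‖X_n‖ = ‖p_n‖ almost surely, Σ_t X_n(t) = Σ_t p_n(t) almost surely, and the mean q_n = E X_n satisfies ⟨N·d, q_n − p_n⟩ ≤ −(N−1)·‖q_n − p_n‖² + ⟨p_n, q_n − p_n⟩. Define the random profile d⁺ = (1/N)·(b + Σ_{n∈N′} p_n⁺ + Σ_{n∈N″} X_n). Then T·N²·(E[V(d⁺)] − V(d)) ≤ −N·Σ_{n∈N′} ‖p_n⁺ − p_n‖² − (N−1)·Σ_{n∈N″} ‖q_n − p_n‖²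 ≤ 0; in particular E[V(d⁺)] ≤ V(d). -/
open MeasureTheory ProbabilityTheory
open scoped RealInnerProductSpace

lemma norm_sq_eq_sum' {T : ℕ} (x : EuclideanSpace ℝ (Fin T)) :
    ‖x‖ ^ 2 = ∑ t, (x t) ^ 2 := by
  rw [EuclideanSpace.norm_eq, Real.sq_sqrt (by positivity)]
  simp [Real.norm_eq_abs, sq_abs]

lemma abs_apply_le' {T : ℕ} (x : EuclideanSpace ℝ (Fin T)) (t : Fin T) : |x t| ≤ ‖x‖ := by
  have h1 : (x t) ^ 2 ≤ ∑ i, (x i) ^ 2 :=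
    Finset.single_le_sum (fun i _ => sq_nonneg (x i)) (Finset.mem_univ t)
  have := norm_sq_eq_sum' x
  nlinarith [abs_nonneg (x t), norm_nonneg x, sq_abs (x t)]

lemma V_mul' {T : ℕ} (hT : 1 ≤ T) (x : EuclideanSpace ℝ (Fin T)) :
    (T : ℝ) * V x = ‖x‖ ^ 2 - (1 / (T : ℝ)) * (∑ t, x t) ^ 2 := by
  have hT0 : (0:ℝ) < (T:ℝ) := by exact_mod_cast Nat.lt_of_lt_of_le Nat.zero_lt_one hT
  have hexp : ∑ t, (x t - (1 / (T : ℝ)) * ∑ s, x s) ^ 2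
      = (∑ t, (x t) ^ 2) - (2 * ((1 / (T : ℝ)) * ∑ s, x s)) * (∑ t, x t)
        + (T:ℝ) * ((1 / (T : ℝ)) * ∑ s, x s) ^ 2 := by
    rw [Finset.sum_congr rfl (fun t _ => by ring :
      ∀ t ∈ Finset.univ, (x t - (1 / (T : ℝ)) * ∑ s, x s) ^ 2
        = (x t) ^ 2 - (2 * ((1 / (T : ℝ)) * ∑ s, x s)) * (x t) + ((1 / (T : ℝ)) * ∑ s, x s) ^ 2)]
    rw [Finset.sum_add_distrib, Finset.sum_sub_distrib, ← Finset.mul_sum, Finset.sum_const,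
      Finset.card_univ, Fintype.card_fin, nsmul_eq_mul]
  rw [V, hexp, norm_sq_eq_sum']
  field_simp
  ring

lemma norm_sum_sq_le' {κ : Type*} [Fintype κ] {E : Type*} [NormedAddCommGroup E]
    (v : κ → E) : ‖∑ i, v i‖ ^ 2 ≤ (Fintype.card κ : ℝ) * ∑ i, ‖v i‖ ^ 2 := by
  have h1 : ‖∑ i, v i‖ ≤ ∑ i, ‖v i‖ := norm_sum_le _ _
  have h2 : (∑ i, ‖v i‖) ^ 2 ≤ (Fintype.card κ : ℝ) * ∑ i, ‖v i‖ ^ 2 := by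
    simpa [Finset.card_univ] using sq_sum_le_card_mul_sum_sq (s := Finset.univ) (f := fun i => ‖v i‖)
  nlinarith [norm_nonneg (∑ i, v i),
    Finset.sum_nonneg (fun i (_ : i ∈ Finset.univ) => norm_nonneg (v i))]

set_option maxHeartbeats 1000000 in
theorem one_step_expected_descent (T : ℕ) (hT : 1 ≤ T)
    {ι₁ ι₂ : Type*} [Fintype ι₁] [Fintype ι₂]
    (N : ℕ) (hNdef : N = Fintype.card ι₁ + Fintype.card ι₂) (hN : 2 ≤ N)
    {Ω : Type*} [MeasurableSpace Ω] (μ : Measure Ω) [IsProbabilityMeasure μ]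
    (b : EuclideanSpace ℝ (Fin T))
    (p₁ : ι₁ → EuclideanSpace ℝ (Fin T)) (p₂ : ι₂ → EuclideanSpace ℝ (Fin T))
    (d : EuclideanSpace ℝ (Fin T))
    (hd : d = (1 / (N : ℝ)) • (b + (∑ n, p₁ n + ∑ n, p₂ n)))
    -- (i) deterministic updates of the continuous-rate applications
    (pplus : ι₁ → EuclideanSpace ℝ (Fin T))
    (hsum₁ : ∀ n, ∑ t, pplus n t = ∑ t, p₁ n t)
    (hdesc₁ : ∀ n, ⟪d, pplus n - p₁ n⟫ ≤ -‖pplus n - p₁ n‖ ^ 2)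
    -- (ii) randomized updates of the discrete-rate applications
    (X : ι₂ → Ω → EuclideanSpace ℝ (Fin T))
    (hmeas : ∀ n, Measurable (X n))
    (hindep : iIndepFun X μ)
    (hint : ∀ n, Integrable (X n) μ)
    (hnorm : ∀ n, ∀ᵐ ω ∂μ, ‖X n ω‖ = ‖p₂ n‖)
    (hsum₂ : ∀ n, ∀ᵐ ω ∂μ, ∑ t, X n ω t = ∑ t, p₂ n t)
    (q : ι₂ → EuclideanSpace ℝ (Fin T)) (hq : ∀ n, q n = ∫ ω, X n ω ∂μ)
    (hdesc₂ : ∀ n, ⟪(N : ℝ) • d, q n - p₂ n⟫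
      ≤ -((N : ℝ) - 1) * ‖q n - p₂ n‖ ^ 2 + ⟪p₂ n, q n - p₂ n⟫)
    -- the updated random average profile
    (dplus : Ω → EuclideanSpace ℝ (Fin T))
    (hdplus : ∀ ω, dplus ω = (1 / (N : ℝ)) • (b + (∑ n, pplus n + ∑ n, X n ω))) :
    (T : ℝ) * (N : ℝ) ^ 2 * ((∫ ω, V (dplus ω) ∂μ) - V d)
        ≤ -(N : ℝ) * ∑ n, ‖pplus n - p₁ n‖ ^ 2 - ((N : ℝ) - 1) * ∑ n, ‖q n - p₂ n‖ ^ 2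
      ∧ -(N : ℝ) * ∑ n, ‖pplus n - p₁ n‖ ^ 2 - ((N : ℝ) - 1) * ∑ n, ‖q n - p₂ n‖ ^ 2 ≤ 0
      ∧ (∫ ω, V (dplus ω) ∂μ) ≤ V d := by
  
  classical
  have hT0 : (0:ℝ) < (T:ℝ) := by exact_mod_cast Nat.lt_of_lt_of_le Nat.zero_lt_one hT
  have hN0 : (0:ℝ) < (N:ℝ) := by exact_mod_cast Nat.lt_of_lt_of_le Nat.zero_lt_two hN
  have hN1 : (1:ℝ) ≤ (N:ℝ) := by exact_mod_cast Nat.one_le_of_lt hN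
  have hNne : (N:ℝ) ≠ 0 := ne_of_gt hN0
  set A : EuclideanSpace ℝ (Fin T) := (N:ℝ) • d with hA
  set u : EuclideanSpace ℝ (Fin T) := ∑ n, (pplus n - p₁ n) with hu
  set W : EuclideanSpace ℝ (Fin T) := ∑ n, (q n - p₂ n) with hW
  set Y : Ω → EuclideanSpace ℝ (Fin T) := fun ω => ∑ n, (X n ω - p₂ n) with hYdef
  set Su : ℝ := ∑ n, ‖pplus n - p₁ n‖ ^ 2 with hSu
  set Sw : ℝ := ∑ n, ‖q n - p₂ n‖ ^ 2 with hSw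
  have hSu0 : 0 ≤ Su := Finset.sum_nonneg fun n _ => sq_nonneg _
  have hSw0 : 0 ≤ Sw := Finset.sum_nonneg fun n _ => sq_nonneg _
  -- A in terms of the data
  have hA' : A = b + (∑ n, p₁ n + ∑ n, p₂ n) := by
    rw [hA, hd, smul_smul, mul_one_div_cancel hNne, one_smul]
  -- scaled update
  have hAplus : ∀ ω, (N:ℝ) • dplus ω = A + (u + Y ω) := by
    intro ω
    rw [hdplus ω, smul_smul, mul_one_div_cancel hNne, one_smul, hA', hu]
    simp only [hYdef, Finset.sum_sub_distrib]
    abel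
  -- measurability / integrability of Y
  have hYmeas : Measurable Y := by
    apply Finset.measurable_sum
    intro n _
    exact (hmeas n).sub measurable_const
  have hYint : Integrable Y μ :=
    integrable_finset_sum _ fun n _ => (hint n).sub (integrable_const _)
  have hYavg : ∫ ω, Y ω ∂μ = W := by
    have h := integral_finset_sum (μ := μ) Finset.univ
      (f := fun (n : ι₂) (ω : Ω) => X n ω - p₂ n)
      (fun n _ => (hint n).sub (integrable_const _))
    simp only [hYdef]
    rw [h, hW]
    refine Finset.sum_congr rfl fun n _ => ?_
    rw [integral_sub (hint n) (integrable_const _), integral_const, probReal_univ, one_smul, hq n]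
  set C : ℝ := ∑ n, 2 * ‖p₂ n‖ with hC
  have hC0 : 0 ≤ C := Finset.sum_nonneg fun n _ => by positivity
  have hYbd : ∀ᵐ ω ∂μ, ‖Y ω‖ ≤ C := by
    filter_upwards [ae_all_iff.2 hnorm] with ω hω
    calc ‖Y ω‖ ≤ ∑ n, ‖X n ω - p₂ n‖ := norm_sum_le _ _
    _ ≤ ∑ n, 2 * ‖p₂ n‖ := Finset.sum_le_sum fun n _ => by
        have h1 : ‖X n ω - p₂ n‖ ≤ ‖X n ω‖ + ‖p₂ n‖ := norm_sub_le _ _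
        rw [hω n] at h1; linarith
  -- the centered squared-norm increment
  set g : Ω → ℝ := fun ω => ‖A + (u + Y ω)‖ ^ 2 - ‖A‖ ^ 2 with hg
  -- time sums vanish
  have hsum_u : ∑ t, u t = 0 := by
    have h1 : ∀ t, u t = ∑ n, (pplus n t - p₁ n t) := fun t => by
      simp only [hu]; rw [WithLp.ofLp_sum, Finset.sum_apply]; rfl
    rw [Finset.sum_congr rfl fun t _ => h1 t, Finset.sum_comm]
    refine Finset.sum_eq_zero fun n _ => ?_
    rw [Finset.sum_sub_distrib, hsum₁ n, sub_self]
  have hYsum : ∀ᵐ ω ∂μ, ∑ t, Y ω t = 0 := by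
    filter_upwards [ae_all_iff.2 hsum₂] with ω hω
    have h1 : ∀ t, Y ω t = ∑ n, (X n ω t - p₂ n t) := fun t => by
      simp only [hYdef]; rw [WithLp.ofLp_sum, Finset.sum_apply]; rfl
    rw [Finset.sum_congr rfl fun t _ => h1 t, Finset.sum_comm]
    refine Finset.sum_eq_zero fun n _ => ?_
    rw [Finset.sum_sub_distrib, hω n, sub_self]
  -- a.e. identity for V (dplus ω)
  have hg_ae : ∀ᵐ ω ∂μ, V (dplus ω) = g ω / ((T:ℝ) * (N:ℝ)^2) + V d := by
    filter_upwards [hYsum] with ω hω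
    have hsd : ∑ t, dplus ω t = ∑ t, d t := by
      have h1 : ∑ t, ((N:ℝ) • dplus ω) t = ∑ t, (A + (u + Y ω)) t := by rw [hAplus ω]
      have h2 : ∀ (x : EuclideanSpace ℝ (Fin T)), ∑ t, ((N:ℝ) • x) t = (N:ℝ) * ∑ t, x t := by
        intro x; rw [Finset.mul_sum]; rfl
      have h3 : ∀ (x y : EuclideanSpace ℝ (Fin T)), ∑ t, (x + y) t = ∑ t, x t + ∑ t, y t := by
        intro x y; rw [← Finset.sum_add_distrib]; rfl
      rw [h2, h3, h3, h2] at h1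
      rw [hsum_u, hω] at h1
      have : (N:ℝ) * ∑ t, dplus ω t = (N:ℝ) * ∑ t, d t := by rw [h1]; ring
      exact mul_left_cancel₀ hNne this
    have e1 := V_mul' hT (dplus ω)
    have e2 := V_mul' hT d
    have hsd2 : (∑ t, dplus ω t)^2 = (∑ t, d t)^2 := by rw [hsd]
    have e3 : ‖A + (u + Y ω)‖^2 = (N:ℝ)^2 * ‖dplus ω‖^2 := by
      rw [← hAplus ω, norm_smul, mul_pow, Real.norm_eq_abs, sq_abs]
    have e4 : ‖A‖^2 = (N:ℝ)^2 * ‖d‖^2 := by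
      rw [hA, norm_smul, mul_pow, Real.norm_eq_abs, sq_abs]
    have key : (T:ℝ)*(N:ℝ)^2 * V (dplus ω) = g ω + (T:ℝ)*(N:ℝ)^2 * V d := by
      simp only [hg]
      rw [e3, e4]
      linear_combination (N:ℝ)^2 * e1 - (N:ℝ)^2 * e2 - ((N:ℝ)^2 * (1/(T:ℝ))) * hsd2
    have hTN2 : (T:ℝ)*(N:ℝ)^2 ≠ 0 := by positivity
    have h5 : V (dplus ω) - V d = g ω / ((T:ℝ)*(N:ℝ)^2) := by
      rw [eq_div_iff hTN2]
      linear_combination key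
    linarith [h5]
  -- integrability of g
  have hgmeas : Measurable g :=
    (((hYmeas.const_add u).const_add A).norm.pow_const 2).sub measurable_const
  have hgint : Integrable g μ := by
    refine Integrable.mono' (integrable_const ((‖A‖ + (‖u‖ + C))^2 + ‖A‖^2))
      hgmeas.aestronglyMeasurable ?_
    filter_upwards [hYbd] with ω hω
    have h1 : ‖A + (u + Y ω)‖ ≤ ‖A‖ + (‖u‖ + C) := by
      calc ‖A + (u + Y ω)‖ ≤ ‖A‖ + ‖u + Y ω‖ := norm_add_le _ _
      _ ≤ ‖A‖ + (‖u‖ + ‖Y ω‖) := by linarith [norm_add_le u (Y ω)]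
      _ ≤ ‖A‖ + (‖u‖ + C) := by linarith
    have h2 : ‖A + (u + Y ω)‖^2 ≤ (‖A‖ + (‖u‖ + C))^2 := by
      nlinarith [norm_nonneg (A + (u + Y ω))]
    simp only [hg, Real.norm_eq_abs]
    rw [abs_le]
    constructor <;>
      linarith [sq_nonneg ‖A + (u + Y ω)‖, sq_nonneg ‖A‖, sq_nonneg (‖A‖ + (‖u‖ + C)), h2]
  -- the integral of V ∘ dplus
  have hVint : ∫ ω, V (dplus ω) ∂μ = (∫ ω, g ω ∂μ) / ((T:ℝ)*(N:ℝ)^2) + V d := by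
    rw [integral_congr_ae hg_ae, integral_add (hgint.div_const _) (integrable_const _),
      integral_div, integral_const, probReal_univ, one_smul]
  -- pointwise expansion of g
  have hgpt : ∀ ω, g ω = (2*⟪A,u⟫ + ‖u‖^2) + 2*⟪A+u, Y ω⟫ + ‖Y ω‖^2 := by
    intro ω
    simp only [hg]
    rw [← add_assoc, norm_add_sq_real (A + u) (Y ω), norm_add_sq_real A u]
    ring
  -- integrability of the pieces
  have h_inner_int : Integrable (fun ω => ⟪A+u, Y ω⟫) μ := hYint.const_inner _
  have hY2meas : Measurable fun ω => ‖Y ω‖^2 := hYmeas.norm.pow_const 2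
  have hY2int : Integrable (fun ω => ‖Y ω‖^2) μ := by
    refine Integrable.mono' (integrable_const (C^2)) hY2meas.aestronglyMeasurable ?_
    filter_upwards [hYbd] with ω hω
    have h1 : ‖Y ω‖^2 ≤ C^2 := pow_le_pow_left₀ (norm_nonneg _) hω 2
    calc ‖‖Y ω‖^2‖ = ‖Y ω‖^2 := by rw [Real.norm_eq_abs, abs_of_nonneg (sq_nonneg _)]
    _ ≤ C^2 := h1
  have hIg : ∫ ω, g ω ∂μ = (2*⟪A,u⟫ + ‖u‖^2) + 2*⟪A+u, W⟫ + ∫ ω, ‖Y ω‖^2 ∂μ := by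
    have h0 : ∫ ω, g ω ∂μ
        = ∫ ω, ((2*⟪A,u⟫ + ‖u‖^2) + 2*⟪A+u, Y ω⟫ + ‖Y ω‖^2) ∂μ := by
      exact integral_congr_ae (Filter.Eventually.of_forall hgpt)
    have ha : Integrable (fun ω => 2*⟪A,u⟫ + ‖u‖^2 + 2*⟪A+u, Y ω⟫) μ :=
      (integrable_const _).add (h_inner_int.const_mul 2)
    rw [h0, integral_add ha hY2int]
    congr 1
    rw [integral_add (integrable_const _) (h_inner_int.const_mul 2), integral_const,
      probReal_univ, one_smul, integral_const_mul, integral_inner hYint,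
      hYavg]
  -- expansion of ∫ ‖Y‖²
  have hYsq : ∀ ω, ‖Y ω‖^2 = ∑ n, ∑ m, ⟪X n ω - p₂ n, X m ω - p₂ m⟫ := by
    intro ω
    rw [← real_inner_self_eq_norm_sq]
    simp only [hYdef]
    rw [sum_inner]
    exact Finset.sum_congr rfl fun n _ => inner_sum _ _ _
  have hpair_meas : ∀ n m : ι₂, Measurable fun ω => ⟪X n ω - p₂ n, X m ω - p₂ m⟫ :=
    fun n m => ((hmeas n).sub measurable_const).inner ((hmeas m).sub measurable_const)
  have hpair_int : ∀ n m : ι₂,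
      Integrable (fun ω => ⟪X n ω - p₂ n, X m ω - p₂ m⟫) μ := by
    intro n m
    refine Integrable.mono' (integrable_const ((2*‖p₂ n‖)*(2*‖p₂ m‖)))
      (hpair_meas n m).aestronglyMeasurable ?_
    filter_upwards [hnorm n, hnorm m] with ω h1 h2
    have b1 : ‖X n ω - p₂ n‖ ≤ 2*‖p₂ n‖ := by
      have := norm_sub_le (X n ω) (p₂ n); rw [h1] at this; linarith
    have b2 : ‖X m ω - p₂ m‖ ≤ 2*‖p₂ m‖ := by
      have := norm_sub_le (X m ω) (p₂ m); rw [h2] at this; linarith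
    calc ‖⟪X n ω - p₂ n, X m ω - p₂ m⟫‖
        ≤ ‖X n ω - p₂ n‖ * ‖X m ω - p₂ m‖ := by
          rw [Real.norm_eq_abs]; exact abs_real_inner_le_norm _ _
    _ ≤ (2*‖p₂ n‖)*(2*‖p₂ m‖) :=
          mul_le_mul b1 b2 (norm_nonneg _) (by positivity)
  have hIY : ∫ ω, ‖Y ω‖^2 ∂μ
      = ∑ n, ∑ m, ∫ ω, ⟪X n ω - p₂ n, X m ω - p₂ m⟫ ∂μ := by
    simp only [hYsq]
    rw [integral_finset_sum _ fun n _ => integrable_finset_sum _ fun m _ => hpair_int n m]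
    exact Finset.sum_congr rfl fun n _ => integral_finset_sum _ fun m _ => hpair_int n m
  -- diagonal terms
  have hdiag : ∀ n, ∫ ω, ⟪X n ω - p₂ n, X n ω - p₂ n⟫ ∂μ = -2 * ⟪p₂ n, q n - p₂ n⟫ := by
    intro n
    have hXinner : Integrable (fun ω => ⟪p₂ n, X n ω⟫) μ := (hint n).const_inner _
    have hpt : ∀ᵐ ω ∂μ, ⟪X n ω - p₂ n, X n ω - p₂ n⟫
        = 2*‖p₂ n‖^2 - 2*⟪p₂ n, X n ω⟫ := by
      filter_upwards [hnorm n] with ω hω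
      rw [real_inner_self_eq_norm_sq, norm_sub_sq_real, hω, real_inner_comm]
      ring
    rw [integral_congr_ae hpt, integral_sub (integrable_const _) (hXinner.const_mul 2),
      integral_const, probReal_univ, one_smul, integral_const_mul,
      integral_inner (hint n), ← hq n, inner_sub_right, real_inner_self_eq_norm_sq]
    ring
  -- off-diagonal terms via independence
  have hcomp_meas : ∀ (n : ι₂) (t : Fin T), Measurable fun ω => X n ω t :=
    fun n t => (measurable_pi_apply t).comp ((WithLp.measurable_ofLp _ _).comp (hmeas n))
  have hcomp_int : ∀ (n : ι₂) (t : Fin T), Integrable (fun ω => X n ω t) μ :=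
    fun n t => (EuclideanSpace.proj t : EuclideanSpace ℝ (Fin T) →L[ℝ] ℝ).integrable_comp (hint n)
  have hcomp_avg : ∀ (n : ι₂) (t : Fin T), ∫ ω, X n ω t ∂μ = q n t := by
    intro n t
    rw [hq n]
    exact ((EuclideanSpace.proj t :
      EuclideanSpace ℝ (Fin T) →L[ℝ] ℝ).integral_comp_comm (hint n))
  have hoff : ∀ n m, n ≠ m → ∫ ω, ⟪X n ω - p₂ n, X m ω - p₂ m⟫ ∂μ
      = ⟪q n - p₂ n, q m - p₂ m⟫ := by
    intro n m hnm
    have hpt : ∀ ω, ⟪X n ω - p₂ n, X m ω - p₂ m⟫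
        = ∑ t, (X n ω t - p₂ n t) * (X m ω t - p₂ m t) := by
      intro ω
      rw [PiLp.inner_apply]
      exact Finset.sum_congr rfl fun t _ => by
        simp [RCLike.inner_apply, conj_trivial]; ring
    have hindep_c : ∀ t : Fin T, IndepFun (fun ω => X n ω t - p₂ n t)
        (fun ω => X m ω t - p₂ m t) μ := by
      intro t
      exact (hindep.indepFun hnm).comp
        (((measurable_pi_apply t).comp (WithLp.measurable_ofLp _ _)).sub_const _)
          (((measurable_pi_apply t).comp (WithLp.measurable_ofLp _ _)).sub_const _)
    have hint_c : ∀ (k : ι₂) (t : Fin T), Integrable (fun ω => X k ω t - p₂ k t) μ :=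
      fun k t => (hcomp_int k t).sub (integrable_const _)
    have hprod_int : ∀ t : Fin T,
        Integrable (fun ω => (X n ω t - p₂ n t) * (X m ω t - p₂ m t)) μ :=
      fun t => (hindep_c t).integrable_mul (hint_c n t) (hint_c m t)
    have havg_c : ∀ (k : ι₂) (t : Fin T), ∫ ω, (X k ω t - p₂ k t) ∂μ = q k t - p₂ k t := by
      intro k t
      rw [integral_sub (hcomp_int k t) (integrable_const _), hcomp_avg, integral_const,
        probReal_univ, one_smul]
    calc ∫ ω, ⟪X n ω - p₂ n, X m ω - p₂ m⟫ ∂μ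
        = ∫ ω, ∑ t, (X n ω t - p₂ n t) * (X m ω t - p₂ m t) ∂μ := by
          exact integral_congr_ae (Filter.Eventually.of_forall hpt)
    _ = ∑ t, ∫ ω, (X n ω t - p₂ n t) * (X m ω t - p₂ m t) ∂μ :=
          integral_finset_sum _ fun t _ => hprod_int t
    _ = ∑ t, (q n t - p₂ n t) * (q m t - p₂ m t) := by
          refine Finset.sum_congr rfl fun t _ => ?_
          have hmul := (hindep_c t).integral_fun_mul_eq_mul_integral (hint_c n t).aestronglyMeasurable
              (hint_c m t).aestronglyMeasurable
          rw [← havg_c n t, ← havg_c m t]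
          exact hmul
    _ = ⟪q n - p₂ n, q m - p₂ m⟫ := by
          rw [PiLp.inner_apply]
          exact (Finset.sum_congr rfl fun t _ => by
            simp [RCLike.inner_apply, conj_trivial]; ring).symm
  -- assemble ∫ ‖Y‖²
  have hIY2 : ∫ ω, ‖Y ω‖^2 ∂μ
      = ‖W‖^2 + ∑ n, (-2*⟪p₂ n, q n - p₂ n⟫ - ‖q n - p₂ n‖^2) := by
    rw [hIY]
    have hval : ∀ n m : ι₂, (∫ ω, ⟪X n ω - p₂ n, X m ω - p₂ m⟫ ∂μ)
        = ⟪q n - p₂ n, q m - p₂ m⟫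
          + (if n = m then (-2*⟪p₂ n, q n - p₂ n⟫ - ‖q n - p₂ n‖^2) else 0) := by
      intro n m
      by_cases h : n = m
      · subst h
        rw [hdiag n, if_pos rfl, real_inner_self_eq_norm_sq]
        ring
      · rw [hoff n m h, if_neg h, add_zero]
    simp only [hval]
    rw [Finset.sum_congr rfl fun n (_ : n ∈ Finset.univ) => Finset.sum_add_distrib,
      Finset.sum_add_distrib]
    congr 1
    · rw [← real_inner_self_eq_norm_sq]
      simp only [hW]
      rw [sum_inner]
      exact Finset.sum_congr rfl fun n _ => (inner_sum _ _ _).symm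
    · exact Finset.sum_congr rfl fun n _ => by simp [Finset.sum_ite_eq]
  -- bounds
  have hAu : ⟪A, u⟫ ≤ -(N:ℝ) * Su := by
    simp only [hu]
    rw [inner_sum]
    have h1 : ∀ n, ⟪A, pplus n - p₁ n⟫ ≤ (N:ℝ) * (-‖pplus n - p₁ n‖^2) := by
      intro n
      rw [hA, real_inner_smul_left]
      exact mul_le_mul_of_nonneg_left (hdesc₁ n) (le_of_lt hN0)
    calc ∑ n, ⟪A, pplus n - p₁ n⟫ ≤ ∑ n, (N:ℝ)*(-‖pplus n - p₁ n‖^2) :=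
          Finset.sum_le_sum fun n _ => h1 n
    _ = -(N:ℝ)*Su := by
          rw [hSu, Finset.mul_sum]
          simp [mul_neg, Finset.sum_neg_distrib]
  have hAW : 2*⟪A, W⟫ + ∑ n, (-2*⟪p₂ n, q n - p₂ n⟫ - ‖q n - p₂ n‖^2)
      ≤ -(2*(N:ℝ)-1) * Sw := by
    have h1 : ⟪A, W⟫ ≤ ∑ n, (-((N:ℝ)-1)*‖q n - p₂ n‖^2 + ⟪p₂ n, q n - p₂ n⟫) := by
      simp only [hW]
      rw [inner_sum]
      exact Finset.sum_le_sum fun n _ => hdesc₂ n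
    have h2 : 2 * ∑ n, (-((N:ℝ)-1)*‖q n - p₂ n‖^2 + ⟪p₂ n, q n - p₂ n⟫)
        + ∑ n, (-2*⟪p₂ n, q n - p₂ n⟫ - ‖q n - p₂ n‖^2)
        = -(2*(N:ℝ)-1) * Sw := by
      rw [Finset.mul_sum, ← Finset.sum_add_distrib, hSw, Finset.mul_sum]
      exact Finset.sum_congr rfl fun n _ => by ring
    linarith
  have hCS : ‖u + W‖^2 ≤ (N:ℝ) * (Su + Sw) := by
    have h1 : u + W = ∑ i : ι₁ ⊕ ι₂,
        Sum.elim (fun n => pplus n - p₁ n) (fun n => q n - p₂ n) i := by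
      rw [Fintype.sum_sum_type]
      simp [hu, hW]
    have h2 := norm_sum_sq_le' (Sum.elim (fun n => pplus n - p₁ n) (fun n => q n - p₂ n))
    have h3 : (Fintype.card (ι₁ ⊕ ι₂) : ℝ) = (N:ℝ) := by
      rw [Fintype.card_sum]
      exact_mod_cast hNdef.symm
    have h4 : ∑ i : ι₁ ⊕ ι₂,
        ‖Sum.elim (fun n => pplus n - p₁ n) (fun n => q n - p₂ n) i‖^2 = Su + Sw := by
      rw [Fintype.sum_sum_type]
      simp [hSu, hSw]
    rw [h1]
    rw [h3, h4] at h2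
    exact h2
  -- the final inequality for ∫ g
  have hfin : ∫ ω, g ω ∂μ ≤ -(N:ℝ) * Su - ((N:ℝ)-1) * Sw := by
    rw [hIg, hIY2]
    have expand : ‖u + W‖^2 = ‖u‖^2 + 2*⟪u,W⟫ + ‖W‖^2 := norm_add_sq_real u W
    have expand2 : ⟪A+u, W⟫ = ⟪A,W⟫ + ⟪u,W⟫ := inner_add_left _ _ _
    nlinarith [hAu, hAW, hCS, expand, expand2]
  have hrhs0 : -(N:ℝ) * Su - ((N:ℝ)-1) * Sw ≤ 0 := by nlinarith
  have hTN2 : (0:ℝ) < (T:ℝ)*(N:ℝ)^2 := by positivity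
  have hmain : (T:ℝ)*(N:ℝ)^2 * ((∫ ω, V (dplus ω) ∂μ) - V d) = ∫ ω, g ω ∂μ := by
    rw [hVint]
    have hTN2' : (T:ℝ)*(N:ℝ)^2 ≠ 0 := ne_of_gt hTN2
    field_simp
    ring
  refine ⟨by rw [hmain]; exact hfin, hrhs0, ?_⟩
  have hle : (T:ℝ)*(N:ℝ)^2 * ((∫ ω, V (dplus ω) ∂μ) - V d)
      ≤ (T:ℝ)*(N:ℝ)^2 * 0 := by
    rw [mul_zero, hmain]; exact hfin.trans hrhs0
  have := le_of_mul_le_mul_left hle hTN2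
  linarith
end

section
/- Let T ≥ 1 and let N′, N″ be disjoint finite index sets with N := |N′| + |N″| ≥ 2. Let b ∈ ℝ^T, p_n ∈ ℝ^T for n ∈ N′ ∪ N″, d = (1/N)·(b + Σ_n p_n), and suppose hypotheses (i) and (ii) of the one-step expected descent property hold: for n ∈ N′, p_n⁺ ∈ ℝ^T with Σ_t p_n⁺(t) = Σ_t p_n(t) and ⟨d, p_n⁺ − p_n⟩ ≤ −‖p_n⁺ − p_n‖²; for n ∈ N″, (X_n)_{n∈N″} independent integrable random vectors in ℝ^T with ‖X_n‖ = ‖p_n‖ a.s., Σ_t X_n(t) = Σ_t p_n(t) a.s., and q_n = E X_n satisfying ⟨N·d, q_n − p_n⟩ ≤ −(N−1)·‖q_n − p_n‖² + ⟨p_n, q_n − p_n⟩. Let d⁺ = (1/N)·(b + Σ_{n∈N′} p_n⁺ + Σ_{n∈N″} X_n). If E[V(d⁺)] = V(d), then p_n⁺ = p_n for every n ∈ N′ and E X_n = p_n for every n ∈ N″. -/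
open MeasureTheory ProbabilityTheory
open scoped RealInnerProductSpace

namespace OffDS

variable {T : ℕ}

lemma norm_sq_eq (x : EuclideanSpace ℝ (Fin T)) : ‖x‖ ^ 2 = ∑ t, (x t) ^ 2 := by
  rw [EuclideanSpace.norm_eq, Real.sq_sqrt (by positivity)]
  simp [Real.norm_eq_abs, sq_abs]

lemma coord_le_norm (x : EuclideanSpace ℝ (Fin T)) (t : Fin T) : |x t| ≤ ‖x‖ := by
  rw [EuclideanSpace.norm_eq, ← Real.sqrt_sq_eq_abs]
  apply Real.sqrt_le_sqrt
  have := Finset.single_le_sum (f := fun s => ‖x s‖ ^ 2) (fun s _ => sq_nonneg _)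
    (Finset.mem_univ t)
  simpa [Real.norm_eq_abs, sq_abs] using this

lemma V_eq (hT : 0 < T) (x : EuclideanSpace ℝ (Fin T)) :
    V x = (1 / (T : ℝ)) * ‖x‖ ^ 2 - ((1 / (T : ℝ)) * ∑ t, x t) ^ 2 := by
  have hTne : (T : ℝ) ≠ 0 := Nat.cast_ne_zero.2 hT.ne'
  rw [V, norm_sq_eq]
  have expand : ∀ t : Fin T, (x t - (1 / (T : ℝ)) * ∑ s, x s) ^ 2
      = (x t) ^ 2 - (2 * ((1 / (T : ℝ)) * ∑ s, x s)) * (x t)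
        + ((1 / (T : ℝ)) * ∑ s, x s) ^ 2 := fun t => by ring
  simp_rw [expand]
  rw [Finset.sum_add_distrib, Finset.sum_sub_distrib, ← Finset.mul_sum, Finset.sum_const,
    Finset.card_univ, Fintype.card_fin, nsmul_eq_mul]
  field_simp
  ring

lemma norm_sum_sq_le {κ : Type*} [Fintype κ] (f : κ → EuclideanSpace ℝ (Fin T)) :
    ‖∑ i, f i‖ ^ 2 ≤ (Fintype.card κ : ℝ) * ∑ i, ‖f i‖ ^ 2 := by
  calc ‖∑ i, f i‖ ^ 2 ≤ (∑ i, ‖f i‖) ^ 2 := by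
        apply pow_le_pow_left₀ (norm_nonneg _) (norm_sum_le _ _)
    _ ≤ (Fintype.card κ : ℝ) * ∑ i, ‖f i‖ ^ 2 := by
        simpa [Finset.card_univ] using
          sq_sum_le_card_mul_sum_sq (s := (Finset.univ : Finset κ)) (f := fun i => ‖f i‖)

lemma sum_apply' {κ : Type*} (s : Finset κ) (f : κ → EuclideanSpace ℝ (Fin T)) (t : Fin T) :
    (∑ i ∈ s, f i) t = ∑ i ∈ s, f i t := by
  classical
  induction s using Finset.induction_on with
  | empty => simp
  | insert _ _ h ih =>
    rw [Finset.sum_insert h, Finset.sum_insert h, PiLp.add_apply, ih]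

end OffDS

open OffDS

set_option maxHeartbeats 1000000 in
theorem fixed_point_of_expected_descent (T : ℕ) (hT : 1 ≤ T)
    {ι₁ ι₂ : Type*} [Fintype ι₁] [Fintype ι₂]
    (N : ℕ) (hNdef : N = Fintype.card ι₁ + Fintype.card ι₂) (hN : 2 ≤ N)
    {Ω : Type*} [MeasurableSpace Ω] (μ : Measure Ω) [IsProbabilityMeasure μ]
    (b : EuclideanSpace ℝ (Fin T))
    (p₁ : ι₁ → EuclideanSpace ℝ (Fin T)) (p₂ : ι₂ → EuclideanSpace ℝ (Fin T))
    (d : EuclideanSpace ℝ (Fin T))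
    (hd : d = (1 / (N : ℝ)) • (b + (∑ n, p₁ n + ∑ n, p₂ n)))
    -- (i) deterministic updates of the continuous-rate applications
    (pplus : ι₁ → EuclideanSpace ℝ (Fin T))
    (hsum₁ : ∀ n, ∑ t, pplus n t = ∑ t, p₁ n t)
    (hdesc₁ : ∀ n, ⟪d, pplus n - p₁ n⟫ ≤ -‖pplus n - p₁ n‖ ^ 2)
    -- (ii) randomized updates of the discrete-rate applications
    (X : ι₂ → Ω → EuclideanSpace ℝ (Fin T))
    (hmeas : ∀ n, Measurable (X n))
    (hindep : iIndepFun X μ)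
    (hint : ∀ n, Integrable (X n) μ)
    (hnorm : ∀ n, ∀ᵐ ω ∂μ, ‖X n ω‖ = ‖p₂ n‖)
    (hsum₂ : ∀ n, ∀ᵐ ω ∂μ, ∑ t, X n ω t = ∑ t, p₂ n t)
    (q : ι₂ → EuclideanSpace ℝ (Fin T)) (hq : ∀ n, q n = ∫ ω, X n ω ∂μ)
    (hdesc₂ : ∀ n, ⟪(N : ℝ) • d, q n - p₂ n⟫
      ≤ -((N : ℝ) - 1) * ‖q n - p₂ n‖ ^ 2 + ⟪p₂ n, q n - p₂ n⟫)
    -- the updated random average profile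
    (dplus : Ω → EuclideanSpace ℝ (Fin T))
    (hdplus : ∀ ω, dplus ω = (1 / (N : ℝ)) • (b + (∑ n, pplus n + ∑ n, X n ω)))
    (heq : (∫ ω, V (dplus ω) ∂μ) = V d) :
    (∀ n, pplus n = p₁ n) ∧ (∀ n, q n = p₂ n) := by
  classical
  have hTpos : 0 < T := hT
  have hT0 : (0 : ℝ) < T := by exact_mod_cast hT
  have hTne : (T : ℝ) ≠ 0 := ne_of_gt hT0
  have hNR : (2 : ℝ) ≤ N := by exact_mod_cast hN
  have hN0 : (0 : ℝ) < N := by linarith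
  have hNne : (N : ℝ) ≠ 0 := ne_of_gt hN0
  set u : ι₁ → EuclideanSpace ℝ (Fin T) := fun n => pplus n - p₁ n with hu
  set v : ι₂ → EuclideanSpace ℝ (Fin T) := fun n => q n - p₂ n with hv
  set Y : ι₂ → Ω → EuclideanSpace ℝ (Fin T) := fun n ω => X n ω - p₂ n with hYdef
  set a : EuclideanSpace ℝ (Fin T) := ∑ n, u n with ha
  set w : Ω → EuclideanSpace ℝ (Fin T) := fun ω => a + ∑ n, Y n ω with hwdef
  -- Step 1 : dplus in terms of w
  have hdw : ∀ ω, dplus ω = d + (N : ℝ)⁻¹ • w ω := by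
    intro ω
    rw [hdplus ω, hd]
    show _ = _ + (N : ℝ)⁻¹ • ((∑ n, (pplus n - p₁ n)) + ∑ n, (X n ω - p₂ n))
    rw [Finset.sum_sub_distrib, Finset.sum_sub_distrib, one_div, ← smul_add]
    congr 1
    abel
  -- Step 2 : integrability toolbox
  have hYint : ∀ n, Integrable (Y n) μ := fun n => (hint n).sub (integrable_const _)
  have hsumYint : Integrable (fun ω => ∑ n, Y n ω) μ :=
    integrable_finset_sum _ fun n _ => hYint n
  have hwint : Integrable w μ := by
    rw [hwdef]; exact (integrable_const a).add hsumYint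
  -- Step 3 : means
  have hYmean : ∀ n, ∫ ω, Y n ω ∂μ = v n := by
    intro n
    show ∫ ω, (X n ω - p₂ n) ∂μ = _
    rw [integral_sub (hint n) (integrable_const _), integral_const, probReal_univ, one_smul]
    show _ = q n - p₂ n
    rw [hq n]
  have hwmean : ∫ ω, w ω ∂μ = a + ∑ n, v n := by
    rw [hwdef]
    rw [integral_add (integrable_const a) hsumYint, integral_const, probReal_univ,
      one_smul, integral_finset_sum _ fun n _ => hYint n]
    simp_rw [hYmean]
  -- Step 4 : bounds
  have hXb : ∀ n, ∀ᵐ ω ∂μ, ‖X n ω‖ ≤ ‖p₂ n‖ := fun n => (hnorm n).mono fun ω h => h.le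
  have hYb : ∀ᵐ ω ∂μ, ∀ n, ‖Y n ω‖ ≤ 2 * ‖p₂ n‖ := by
    rw [ae_all_iff]
    intro n
    filter_upwards [hXb n] with ω h
    calc ‖X n ω - p₂ n‖ ≤ ‖X n ω‖ + ‖p₂ n‖ := norm_sub_le _ _
      _ ≤ 2 * ‖p₂ n‖ := by linarith
  have hwb : ∀ᵐ ω ∂μ, ‖w ω‖ ≤ ‖a‖ + ∑ n, 2 * ‖p₂ n‖ := by
    filter_upwards [hYb] with ω h
    calc ‖w ω‖ ≤ ‖a‖ + ‖∑ n, Y n ω‖ := norm_add_le _ _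
      _ ≤ ‖a‖ + ∑ n, ‖Y n ω‖ := by
          exact add_le_add le_rfl (norm_sum_le _ _)
      _ ≤ ‖a‖ + ∑ n, 2 * ‖p₂ n‖ :=
          add_le_add le_rfl (Finset.sum_le_sum fun n _ => h n)
  -- Step 5 : integrable squares and inner products
  have hinnerdw : Integrable (fun ω => ⟪d, w ω⟫) μ := hwint.const_inner d
  have hwsqint : Integrable (fun ω => ‖w ω‖ ^ 2) μ := by
    apply Integrable.mono' (integrable_const ((‖a‖ + ∑ n, 2 * ‖p₂ n‖) ^ 2))
    · exact ((continuous_pow 2).comp continuous_norm).comp_aestronglyMeasurable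
        hwint.aestronglyMeasurable
    · filter_upwards [hwb] with ω h
      rw [Real.norm_eq_abs, abs_of_nonneg (sq_nonneg _)]
      exact pow_le_pow_left₀ (norm_nonneg _) h 2
  have hYYint : ∀ m n, Integrable (fun ω => ⟪Y m ω, Y n ω⟫) μ := by
    intro m n
    apply Integrable.mono' (integrable_const ((2 * ‖p₂ m‖) * (2 * ‖p₂ n‖)))
    · exact AEStronglyMeasurable.inner (hYint m).aestronglyMeasurable
        (hYint n).aestronglyMeasurable
    · filter_upwards [hYb] with ω h
      calc ‖⟪Y m ω, Y n ω⟫‖ ≤ ‖Y m ω‖ * ‖Y n ω‖ := norm_inner_le_norm _ _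
        _ ≤ (2 * ‖p₂ m‖) * (2 * ‖p₂ n‖) :=
            mul_le_mul (h m) (h n) (norm_nonneg _) (by positivity)
  -- Step 6 : independence cross terms
  have hYcoord_int : ∀ n (t : Fin T), Integrable (fun ω => Y n ω t) μ := fun n t =>
    (EuclideanSpace.proj (𝕜 := ℝ) t).integrable_comp (hYint n)
  have hYcoord_mean : ∀ n (t : Fin T), ∫ ω, Y n ω t ∂μ = v n t := by
    intro n t
    have h := (EuclideanSpace.proj (𝕜 := ℝ) t).integral_comp_comm (hYint n)
    rw [hYmean n] at h
    simpa using h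
  have hYcoord_b : ∀ᵐ ω ∂μ, ∀ n t, |Y n ω t| ≤ 2 * ‖p₂ n‖ := by
    filter_upwards [hYb] with ω h n t
    exact (coord_le_norm _ t).trans (h n)
  have hYY : ∀ m n, m ≠ n → ∫ ω, ⟪Y m ω, Y n ω⟫ ∂μ = ⟪v m, v n⟫ := by
    intro m n hmn
    have hind : ∀ t : Fin T,
        IndepFun (fun ω => Y m ω t) (fun ω => Y n ω t) μ := by
      intro t
      have h1 : IndepFun (Y m) (Y n) μ := by
        apply (hindep.indepFun hmn).comp
          (φ := fun x : EuclideanSpace ℝ (Fin T) => x - p₂ m)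
          (ψ := fun x : EuclideanSpace ℝ (Fin T) => x - p₂ n)
        · exact measurable_id.sub measurable_const
        · exact measurable_id.sub measurable_const
      exact h1.comp ((EuclideanSpace.proj (𝕜 := ℝ) t).continuous.measurable)
        ((EuclideanSpace.proj (𝕜 := ℝ) t).continuous.measurable)
    have hcomp : ∀ t : Fin T, ∫ ω, Y m ω t * Y n ω t ∂μ = v m t * v n t := by
      intro t
      have := IndepFun.integral_fun_mul_eq_mul_integral (hind t) (hYcoord_int m t).aestronglyMeasurable
        (hYcoord_int n t).aestronglyMeasurable
      rw [this, hYcoord_mean, hYcoord_mean]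
    have e : ∀ ω, ⟪Y m ω, Y n ω⟫ = ∑ t, Y m ω t * Y n ω t := by
      intro ω
      simp [PiLp.inner_apply, RCLike.inner_apply, conj_trivial]
      exact Finset.sum_congr rfl fun _ _ => mul_comm _ _
    have emul_int : ∀ t : Fin T, Integrable (fun ω => Y m ω t * Y n ω t) μ := by
      intro t
      apply Integrable.mono' (integrable_const ((2 * ‖p₂ m‖) * (2 * ‖p₂ n‖)))
      · exact ((hYcoord_int m t).aestronglyMeasurable).mul
          ((hYcoord_int n t).aestronglyMeasurable)
      · filter_upwards [hYcoord_b] with ω h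
        rw [Real.norm_eq_abs, abs_mul]
        exact mul_le_mul (h m t) (h n t) (abs_nonneg _) (by positivity)
    calc ∫ ω, ⟪Y m ω, Y n ω⟫ ∂μ = ∫ ω, ∑ t, Y m ω t * Y n ω t ∂μ := by simp_rw [e]
      _ = ∑ t, ∫ ω, Y m ω t * Y n ω t ∂μ := integral_finset_sum _ fun t _ => emul_int t
      _ = ∑ t, v m t * v n t := by simp_rw [hcomp]
      _ = ⟪v m, v n⟫ := by
          simp [PiLp.inner_apply, RCLike.inner_apply, conj_trivial]
          exact Finset.sum_congr rfl fun _ _ => mul_comm _ _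
  -- Step 7 : diagonal terms
  have hYsq : ∀ n, ∫ ω, ‖Y n ω‖ ^ 2 ∂μ = -2 * ⟪p₂ n, v n⟫ := by
    intro n
    have e : ∀ ω, ‖Y n ω‖ ^ 2
        = ‖X n ω‖ ^ 2 - 2 * ⟪p₂ n, X n ω⟫ + ‖p₂ n‖ ^ 2 := by
      intro ω
      show ‖X n ω - p₂ n‖ ^ 2 = _
      rw [norm_sub_sq_real, real_inner_comm]
    have hae : (fun _ : Ω => ‖p₂ n‖ ^ 2) =ᵐ[μ] fun ω => ‖X n ω‖ ^ 2 :=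
      (hnorm n).mono fun ω h => by simp [h]
    have hXsqint : Integrable (fun ω => ‖X n ω‖ ^ 2) μ :=
      (integrable_const (‖p₂ n‖ ^ 2)).congr hae
    have hXinner : Integrable (fun ω => ⟪p₂ n, X n ω⟫) μ := (hint n).const_inner _
    have h1 : ∫ ω, ‖X n ω‖ ^ 2 ∂μ = ‖p₂ n‖ ^ 2 := by
      rw [integral_congr_ae hae.symm, integral_const,
        probReal_univ, one_smul]
    have h2 : ∫ ω, ⟪p₂ n, X n ω⟫ ∂μ = ⟪p₂ n, q n⟫ := by
      rw [integral_inner (hint n), ← hq n]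
    have hf1 : Integrable (fun ω => ‖X n ω‖ ^ 2 - 2 * ⟪p₂ n, X n ω⟫) μ :=
      hXsqint.sub (hXinner.const_mul 2)
    have hf2 : Integrable (fun ω => 2 * ⟪p₂ n, X n ω⟫) μ := hXinner.const_mul 2
    simp_rw [e]
    rw [integral_add hf1 (integrable_const _),
      integral_sub hXsqint hf2, integral_const_mul, h1, h2,
      integral_const, probReal_univ, one_smul]
    rw [hv]
    rw [inner_sub_right]
    ring_nf
    rw [real_inner_self_eq_norm_sq]
    ring
  -- Step 8 : expectation of ‖∑ Y‖²
  have hcross : ∫ ω, ‖∑ n, Y n ω‖ ^ 2 ∂μ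
      = ‖∑ n, v n‖ ^ 2 + ∑ n, (-2 * ⟪p₂ n, v n⟫ - ‖v n‖ ^ 2) := by
    have e : ∀ ω, ‖∑ n, Y n ω‖ ^ 2 = ∑ m, ∑ n, ⟪Y m ω, Y n ω⟫ := by
      intro ω
      rw [← real_inner_self_eq_norm_sq, sum_inner]
      exact Finset.sum_congr rfl fun m _ => inner_sum _ _ _
    have hval : ∀ m n, ∫ ω, ⟪Y m ω, Y n ω⟫ ∂μ
        = ⟪v m, v n⟫ + (if m = n then (-2 * ⟪p₂ n, v n⟫ - ‖v n‖ ^ 2) else 0) := by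
      intro m n
      by_cases h : m = n
      · subst h
        rw [if_pos rfl]
        have e2 : (fun ω => ⟪Y m ω, Y m ω⟫) = fun ω => ‖Y m ω‖ ^ 2 := by
          funext ω; rw [real_inner_self_eq_norm_sq]
        rw [e2, hYsq m, real_inner_self_eq_norm_sq]
        ring
      · rw [if_neg h, hYY m n h, add_zero]
    simp_rw [e]
    rw [integral_finset_sum _ fun m _ => integrable_finset_sum _ fun n _ => hYYint m n]
    have h3 : ∀ m, ∫ ω, ∑ n, ⟪Y m ω, Y n ω⟫ ∂μ = ∑ n, ∫ ω, ⟪Y m ω, Y n ω⟫ ∂μ :=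
      fun m => integral_finset_sum _ fun n _ => hYYint m n
    simp_rw [h3, hval, Finset.sum_add_distrib, Finset.sum_ite_eq, Finset.mem_univ, if_pos]
    congr 1
    rw [← real_inner_self_eq_norm_sq, sum_inner]
    exact Finset.sum_congr rfl fun m _ => (inner_sum _ _ _).symm
  -- Step 9 : expectation of ‖w‖²
  have hinneraY : Integrable (fun ω => ⟪a, ∑ n, Y n ω⟫) μ := hsumYint.const_inner a
  have hsumYsqint : Integrable (fun ω => ‖∑ n, Y n ω‖ ^ 2) μ := by
    apply Integrable.mono' (integrable_const ((∑ n, 2 * ‖p₂ n‖) ^ 2))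
    · exact ((continuous_pow 2).comp continuous_norm).comp_aestronglyMeasurable
        hsumYint.aestronglyMeasurable
    · filter_upwards [hYb] with ω h
      rw [Real.norm_eq_abs, abs_of_nonneg (sq_nonneg _)]
      apply pow_le_pow_left₀ (norm_nonneg _)
      exact (norm_sum_le _ _).trans (Finset.sum_le_sum fun n _ => h n)
  have hwsq : ∫ ω, ‖w ω‖ ^ 2 ∂μ
      = ‖a + ∑ n, v n‖ ^ 2 + ∑ n, (-2 * ⟪p₂ n, v n⟫ - ‖v n‖ ^ 2) := by
    have e : ∀ ω, ‖w ω‖ ^ 2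
        = ‖a‖ ^ 2 + 2 * ⟪a, ∑ n, Y n ω⟫ + ‖∑ n, Y n ω‖ ^ 2 := by
      intro ω
      show ‖a + ∑ n, Y n ω‖ ^ 2 = _
      rw [norm_add_sq_real]
    have hsumYmean : ∫ ω, ∑ n, Y n ω ∂μ = ∑ n, v n := by
      rw [integral_finset_sum _ fun n _ => hYint n]
      simp_rw [hYmean]
    have hia : ∫ ω, ⟪a, ∑ n, Y n ω⟫ ∂μ = ⟪a, ∑ n, v n⟫ := by
      rw [integral_inner hsumYint, hsumYmean]
    have hg1 : Integrable (fun ω => 2 * ⟪a, ∑ n, Y n ω⟫) μ := hinneraY.const_mul 2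
    have hg2 : Integrable (fun ω => ‖a‖ ^ 2 + 2 * ⟪a, ∑ n, Y n ω⟫) μ :=
      (integrable_const _).add hg1
    simp_rw [e]
    rw [integral_add hg2 hsumYsqint, integral_add (integrable_const _) hg1,
      integral_const, probReal_univ, one_smul,
      integral_const_mul, hia, hcross, norm_add_sq_real]
    ring
  -- Step 10 : expectation of ‖dplus‖²
  have hdplus_sq : ∀ ω, ‖dplus ω‖ ^ 2
      = ‖d‖ ^ 2 + 2 * (N : ℝ)⁻¹ * ⟪d, w ω⟫ + (N : ℝ)⁻¹ ^ 2 * ‖w ω‖ ^ 2 := by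
    intro ω
    rw [hdw ω, norm_add_sq_real, real_inner_smul_right, norm_smul, Real.norm_eq_abs,
      abs_of_nonneg (by positivity : (0:ℝ) ≤ (N : ℝ)⁻¹), mul_pow]
    ring
  have hIdw : ∫ ω, ⟪d, w ω⟫ ∂μ = ⟪d, a + ∑ n, v n⟫ := by
    rw [integral_inner hwint, hwmean]
  have hIdplus : ∫ ω, ‖dplus ω‖ ^ 2 ∂μ
      = ‖d‖ ^ 2 + 2 * (N : ℝ)⁻¹ * ⟪d, a + ∑ n, v n⟫
        + (N : ℝ)⁻¹ ^ 2 * (‖a + ∑ n, v n‖ ^ 2 + ∑ n, (-2 * ⟪p₂ n, v n⟫ - ‖v n‖ ^ 2)) := by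
    have hh1 : Integrable (fun ω => 2 * (N : ℝ)⁻¹ * ⟪d, w ω⟫) μ := hinnerdw.const_mul _
    have hh2 : Integrable (fun ω => ‖d‖ ^ 2 + 2 * (N : ℝ)⁻¹ * ⟪d, w ω⟫) μ :=
      (integrable_const _).add hh1
    have hh3 : Integrable (fun ω => (N : ℝ)⁻¹ ^ 2 * ‖w ω‖ ^ 2) μ := hwsqint.const_mul _
    simp_rw [hdplus_sq]
    rw [integral_add hh2 hh3, integral_add (integrable_const _) hh1,
      integral_const, probReal_univ, one_smul,
      integral_const_mul, integral_const_mul, hIdw, hwsq]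
  -- Step 11 : mean of coordinates is preserved a.e.
  have hMconst : ∀ᵐ ω ∂μ, ∑ t, dplus ω t = ∑ t, d t := by
    have h2 : ∀ᵐ ω ∂μ, ∀ n, ∑ t, X n ω t = ∑ t, p₂ n t := ae_all_iff.2 hsum₂
    filter_upwards [h2] with ω h
    rw [hdplus ω, hd]
    have expand : ∀ (x y : EuclideanSpace ℝ (Fin T)),
        ∑ t, ((1 / (N : ℝ)) • (b + (x + y))) t
          = (1 / (N : ℝ)) * (∑ t, b t + (∑ t, x t + ∑ t, y t)) := by
      intro x y
      simp_rw [PiLp.smul_apply, PiLp.add_apply, smul_eq_mul]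
      rw [← Finset.mul_sum, Finset.sum_add_distrib, Finset.sum_add_distrib]
    rw [expand, expand]
    simp_rw [sum_apply']
    have e1 : ∑ t : Fin T, ∑ n : ι₁, pplus n t = ∑ t : Fin T, ∑ n : ι₁, p₁ n t := by
      calc ∑ t : Fin T, ∑ n : ι₁, pplus n t = ∑ n : ι₁, ∑ t : Fin T, pplus n t :=
            Finset.sum_comm
        _ = ∑ n : ι₁, ∑ t : Fin T, p₁ n t := Finset.sum_congr rfl fun n _ => hsum₁ n
        _ = ∑ t : Fin T, ∑ n : ι₁, p₁ n t := Finset.sum_comm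
    have e2 : ∑ t : Fin T, ∑ n : ι₂, X n ω t = ∑ t : Fin T, ∑ n : ι₂, p₂ n t := by
      calc ∑ t : Fin T, ∑ n : ι₂, X n ω t = ∑ n : ι₂, ∑ t : Fin T, X n ω t :=
            Finset.sum_comm
        _ = ∑ n : ι₂, ∑ t : Fin T, p₂ n t := Finset.sum_congr rfl fun n _ => h n
        _ = ∑ t : Fin T, ∑ n : ι₂, p₂ n t := Finset.sum_comm
    rw [e1, e2]
  -- Step 12 : the key equation ∫ ‖dplus‖² = ‖d‖²
  have hVd : V d = (1 / (T : ℝ)) * ‖d‖ ^ 2 - ((1 / (T : ℝ)) * ∑ t, d t) ^ 2 := V_eq hTpos d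
  have hVae : (fun ω => V (dplus ω)) =ᵐ[μ]
      fun ω => (1 / (T : ℝ)) * ‖dplus ω‖ ^ 2 - ((1 / (T : ℝ)) * ∑ t, d t) ^ 2 := by
    filter_upwards [hMconst] with ω h
    rw [V_eq hTpos, h]
  have hdpsqint : Integrable (fun ω => ‖dplus ω‖ ^ 2) μ := by
    have hh1 : Integrable (fun ω => 2 * (N : ℝ)⁻¹ * ⟪d, w ω⟫) μ := hinnerdw.const_mul _
    have hh2 : Integrable (fun ω => ‖d‖ ^ 2 + 2 * (N : ℝ)⁻¹ * ⟪d, w ω⟫) μ :=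
      (integrable_const _).add hh1
    have hh3 : Integrable (fun ω => (N : ℝ)⁻¹ ^ 2 * ‖w ω‖ ^ 2) μ := hwsqint.const_mul _
    have hh4 : Integrable
        (fun ω => ‖d‖ ^ 2 + 2 * (N : ℝ)⁻¹ * ⟪d, w ω⟫ + (N : ℝ)⁻¹ ^ 2 * ‖w ω‖ ^ 2) μ :=
      hh2.add hh3
    exact hh4.congr (Filter.Eventually.of_forall fun ω => (hdplus_sq ω).symm)
  have hIV : ∫ ω, V (dplus ω) ∂μ
      = (1 / (T : ℝ)) * ∫ ω, ‖dplus ω‖ ^ 2 ∂μ - ((1 / (T : ℝ)) * ∑ t, d t) ^ 2 := by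
    have hk1 : Integrable (fun ω => (1 / (T : ℝ)) * ‖dplus ω‖ ^ 2) μ :=
      hdpsqint.const_mul _
    rw [integral_congr_ae hVae]
    simp_rw [mul_pow]
    rw [integral_sub hk1 (integrable_const _), integral_const_mul, integral_const,
      probReal_univ, one_smul]
  have hkey : ∫ ω, ‖dplus ω‖ ^ 2 ∂μ = ‖d‖ ^ 2 := by
    rw [hIV, hVd] at heq
    have h1 : (1 / (T : ℝ)) * ∫ ω, ‖dplus ω‖ ^ 2 ∂μ = (1 / (T : ℝ)) * ‖d‖ ^ 2 := by
      linarith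
    exact mul_left_cancel₀ (one_div_ne_zero hTne) h1
  -- Step 13 : conclude by the descent inequalities
  set A : ℝ := ∑ n, ‖u n‖ ^ 2 with hA
  set B : ℝ := ∑ n, ‖v n‖ ^ 2 with hB
  set IA : ℝ := ⟪d, a⟫ with hIAdef
  set IB : ℝ := ⟪d, ∑ n, v n⟫ with hIBdef
  set Q : ℝ := ‖a + ∑ n, v n‖ ^ 2 with hQdef
  set P : ℝ := ∑ n, ⟪p₂ n, v n⟫ with hPdef
  have hA0 : 0 ≤ A := Finset.sum_nonneg fun n _ => sq_nonneg _
  have hB0 : 0 ≤ B := Finset.sum_nonneg fun n _ => sq_nonneg _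
  have hIA : IA ≤ -A := by
    rw [hIAdef, ha, inner_sum]
    calc ∑ n, ⟪d, u n⟫ ≤ ∑ n, -‖u n‖ ^ 2 := Finset.sum_le_sum fun n _ => hdesc₁ n
      _ = -A := by rw [hA, Finset.sum_neg_distrib]
  have hIB : (N : ℝ) * IB ≤ -((N : ℝ) - 1) * B + P := by
    rw [hIBdef, inner_sum, Finset.mul_sum]
    have step : ∀ n, (N : ℝ) * ⟪d, v n⟫ ≤ -((N : ℝ) - 1) * ‖v n‖ ^ 2 + ⟪p₂ n, v n⟫ := by
      intro n
      have h := hdesc₂ n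
      rwa [real_inner_smul_left] at h
    calc ∑ n, (N : ℝ) * ⟪d, v n⟫
        ≤ ∑ n, (-((N : ℝ) - 1) * ‖v n‖ ^ 2 + ⟪p₂ n, v n⟫) :=
          Finset.sum_le_sum fun n _ => step n
      _ = -((N : ℝ) - 1) * B + P := by
          rw [Finset.sum_add_distrib, ← Finset.mul_sum, hB, hPdef]
  have hcauchy : Q ≤ (N : ℝ) * (A + B) := by
    have h := norm_sum_sq_le (f := Sum.elim u v) (T := T)
    simp only [Fintype.sum_sum_type, Sum.elim_inl, Sum.elim_inr, Fintype.card_sum] at h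
    rw [← ha, ← hA, ← hB, ← hQdef] at h
    have hNc : ((Fintype.card ι₁ : ℝ) + (Fintype.card ι₂ : ℝ)) = (N : ℝ) := by
      rw [hNdef]; push_cast; ring
    push_cast at h
    rw [hNc] at h
    exact h
  have hsplit : ∑ n, (-2 * ⟪p₂ n, v n⟫ - ‖v n‖ ^ 2) = -2 * P - B := by
    rw [Finset.sum_sub_distrib, ← Finset.mul_sum, hB, hPdef]
  have hzero : 2 * (N : ℝ)⁻¹ * (IA + IB) + (N : ℝ)⁻¹ ^ 2 * (Q - 2 * P - B) = 0 := by
    have h := hIdplus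
    rw [hkey, hsplit, inner_add_right, ← hIAdef, ← hIBdef] at h
    linarith
  have hzero' : 2 * (N : ℝ) * (IA + IB) + (Q - 2 * P - B) = 0 := by
    have e1 : (N : ℝ) ^ 2 * (2 * (N : ℝ)⁻¹ * (IA + IB) + (N : ℝ)⁻¹ ^ 2 * (Q - 2 * P - B))
        = 2 * (N : ℝ) * (IA + IB) + (Q - 2 * P - B) := by
      field_simp
    rw [← e1, hzero, mul_zero]
  have h1 : 2 * (N : ℝ) * IA ≤ 2 * (N : ℝ) * (-A) :=
    mul_le_mul_of_nonneg_left hIA (by positivity)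
  have hfin : (N : ℝ) * A + ((N : ℝ) - 1) * B ≤ 0 := by nlinarith [hzero', hIB, hcauchy, h1]
  have hAz : A = 0 := by
    apply le_antisymm _ hA0
    nlinarith [mul_nonneg (by linarith : (0 : ℝ) ≤ (N : ℝ) - 1) hB0]
  have hBz : B = 0 := by
    apply le_antisymm _ hB0
    nlinarith [mul_nonneg (le_of_lt hN0) hA0]
  constructor
  · intro n
    have hAz' : ∑ i : ι₁, ‖u i‖ ^ 2 = 0 := by rw [← hA]; exact hAz
    have h0 : ‖u n‖ ^ 2 = 0 :=
      (Finset.sum_eq_zero_iff_of_nonneg fun i _ => sq_nonneg ‖u i‖).1 hAz' n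
        (Finset.mem_univ n)
    have h2 : u n = 0 := norm_eq_zero.mp (pow_eq_zero_iff two_ne_zero |>.mp h0)
    have h3 : pplus n - p₁ n = 0 := h2
    exact sub_eq_zero.mp h3
  · intro n
    have hBz' : ∑ i : ι₂, ‖v i‖ ^ 2 = 0 := by rw [← hB]; exact hBz
    have h0 : ‖v n‖ ^ 2 = 0 :=
      (Finset.sum_eq_zero_iff_of_nonneg fun i _ => sq_nonneg ‖v i‖).1 hBz' n
        (Finset.mem_univ n)
    have h2 : v n = 0 := norm_eq_zero.mp (pow_eq_zero_iff two_ne_zero |>.mp h0)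
    have h3 : q n - p₂ n = 0 := h2
    exact sub_eq_zero.mp h3
end
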